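/- arXiv:2203.14394 — 2 statements merged into one kernel-verified Lean document; each statement's English description precedes it below -/
import Mathlib

section
/- Define modified radii r⁻_{l−1} = (1 − 1/φ(l−1))·r_{l−1} and r⁺_l = (1 + 1/φ(l))·r_l, where r_l = r₀·e^{−l} and 0 < r₀ < 1 is small. If h(x) = 2·arctan(x/2) satisfies x − x³ ≤ h(x) ≤ x on [0, r₀], and φ(l) ≥ φ(l−1) ≥ C for a sufficiently large constant C (in particular e·φ(l) ≥ φ(l−1)), then h(r⁻_{l−1}) + (1/1000)·h(r_{l + log φ(l)}) ≤ h(r_{l−1}) and h(r_l) + (1/1000)·h(r_{l + log φ(l)}) ≤ h(r⁺_l), where r_{l + log φ(l)} := r_l/φ(l). -/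
lemma arctan_gap_aux : ∀ x ∈ Set.Icc (0:ℝ) 1, ∀ y ∈ Set.Icc (0:ℝ) 1, x ≤ y →
    (4/5 : ℝ) * (y - x) ≤ 2 * Real.arctan (y / 2) - 2 * Real.arctan (x / 2) := by
  have hderiv : ∀ t : ℝ, HasDerivAt (fun s : ℝ => 2 * Real.arctan (s / 2))
      (1 / (1 + (t / 2) ^ 2)) t := by
    intro t
    have h1 : HasDerivAt (fun s : ℝ => s / 2) (1 / 2) t := by
      simpa using (hasDerivAt_id t).div_const 2
    have := (Real.hasDerivAt_arctan (t / 2)).comp t h1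
    have h2 := this.const_mul 2
    refine h2.congr_deriv ?_
    ring
  have hcont : ContinuousOn (fun s : ℝ => 2 * Real.arctan (s / 2)) (Set.Icc 0 1) :=
    fun t _ => (hderiv t).continuousAt.continuousWithinAt
  have hdiff : DifferentiableOn ℝ (fun s : ℝ => 2 * Real.arctan (s / 2))
      (interior (Set.Icc (0:ℝ) 1)) := fun t _ => (hderiv t).differentiableAt.differentiableWithinAt
  refine (convex_Icc (0:ℝ) 1).mul_sub_le_image_sub_of_le_deriv hcont hdiff ?_
  intro t ht
  rw [interior_Icc] at ht
  rw [(hderiv t).deriv]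
  rw [div_le_div_iff₀ (by norm_num) (by positivity)]
  nlinarith [ht.1.le, ht.2.le, sq_nonneg t]

set_option maxHeartbeats 2000000 in
/-- Modified radii estimates: with `h(x) = 2 arctan(x/2)`, `r_l = r₀ e^{−l}`,
`r⁻_{l−1} = (1 − 1/φ(l−1)) r_{l−1}`, `r⁺_l = (1 + 1/φ(l)) r_l`, and
`r_{l+log φ(l)} := r_l/φ(l)`: if `x − x³ ≤ h(x) ≤ x` on `[0, r₀]`, `0 < r₀ < 1`,
and `φ(l) ≥ φ(l−1) ≥ C` for a sufficiently large constant `C` (in particular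
`e·φ(l) ≥ φ(l−1)`), then
`h(r⁻_{l−1}) + (1/1000) h(r_{l+log φ(l)}) ≤ h(r_{l−1})` and
`h(r_l) + (1/1000) h(r_{l+log φ(l)}) ≤ h(r⁺_l)`. -/
theorem stmt5 :
    ∃ C : ℝ, ∀ (r₀ : ℝ) (φ : ℕ → ℝ) (l : ℕ), 0 < r₀ → r₀ < 1 → 1 ≤ l →
      (∀ x : ℝ, 0 ≤ x → x ≤ r₀ →
        x - x ^ 3 ≤ 2 * Real.arctan (x / 2) ∧ 2 * Real.arctan (x / 2) ≤ x) →
      C ≤ φ (l - 1) → φ (l - 1) ≤ φ l → φ (l - 1) ≤ Real.exp 1 * φ l →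
      (let h : ℝ → ℝ := fun x => 2 * Real.arctan (x / 2)
       let r : ℕ → ℝ := fun m => r₀ * Real.exp (-(m : ℝ))
       h ((1 - 1 / φ (l - 1)) * r (l - 1)) + (1 / 1000) * h (r l / φ l) ≤ h (r (l - 1)) ∧
       h (r l) + (1 / 1000) * h (r l / φ l) ≤ h ((1 + 1 / φ l) * r l)) := by
  refine ⟨1, ?_⟩
  intro r₀ φ l hr₀ hr₀1 hl hbound hC hmono hexp
  intro h r
  simp only [h, r]
  clear_value h r
  clear h r
  set φ₀ := φ (l - 1) with hφ₀def
  set φ₁ := φ l with hφ₁def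
  have hφ₀ : 1 ≤ φ₀ := hC
  have hφ₁ : 1 ≤ φ₁ := hφ₀.trans hmono
  have hφ₀pos : 0 < φ₀ := by linarith
  have hφ₁pos : 0 < φ₁ := by linarith
  set a := r₀ * Real.exp (-((l - 1 : ℕ) : ℝ)) with hadef
  set b := r₀ * Real.exp (-(l : ℝ)) with hbdef
  have hcast : ((l - 1 : ℕ) : ℝ) = (l : ℝ) - 1 := by
    push_cast [Nat.cast_sub hl]; ring
  have hab : a = b * Real.exp 1 := by
    rw [hadef, hbdef, hcast, mul_assoc, ← Real.exp_add]
    ring_nf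
  have hbpos : 0 < b := by positivity
  have hapos : 0 < a := by positivity
  have hble : b ≤ a := by
    rw [hab]; nlinarith [Real.one_le_exp (by norm_num : (0:ℝ) ≤ 1)]
  have har : a ≤ r₀ := by
    have h1 : Real.exp (-(((l - 1 : ℕ)) : ℝ)) ≤ 1 := by
      rw [Real.exp_le_one_iff]
      simp [Nat.cast_nonneg]
    nlinarith
  have ha1 : a ≤ 1 := har.trans hr₀1.le
  -- key: b / φ₁ ≤ a / φ₀
  have hkey : b / φ₁ ≤ a / φ₀ := by
    rw [div_le_div_iff₀ hφ₁pos hφ₀pos, hab]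
    nlinarith [hbpos.le]
  have hbφ_nonneg : 0 ≤ b / φ₁ := by positivity
  have hbφ_le : b / φ₁ ≤ r₀ := by
    have : b / φ₁ ≤ b := by
      rw [div_le_iff₀ hφ₁pos]; nlinarith
    linarith [hble.trans har]
  have hsmall : 2 * Real.arctan (b / φ₁ / 2) ≤ b / φ₁ := (hbound _ hbφ_nonneg hbφ_le).2
  have hsmall_nn : 0 ≤ 2 * Real.arctan (b / φ₁ / 2) := by
    have h1 := (hbound _ hbφ_nonneg hbφ_le).1
    have h2 : b / φ₁ ≤ 1 := hbφ_le.trans hr₀1.le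
    have h3 : (b / φ₁) ^ 3 ≤ b / φ₁ := pow_le_of_le_one hbφ_nonneg h2 (by norm_num)
    linarith
  have hinv₀ : 0 < 1 / φ₀ := by positivity
  have hinv₀' : 1 / φ₀ ≤ 1 := by rw [div_le_one hφ₀pos]; exact hφ₀
  have hinv₁ : 0 < 1 / φ₁ := by positivity
  have hinv₁' : 1 / φ₁ ≤ 1 := by rw [div_le_one hφ₁pos]; exact hφ₁
  constructor
  · -- first inequality
    have hx1 : 0 ≤ (1 - 1 / φ₀) * a := mul_nonneg (by linarith) hapos.le
    have hx2 : (1 - 1 / φ₀) * a ≤ a := by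
      nlinarith [mul_nonneg hinv₀.le hapos.le]
    have hgap := arctan_gap_aux ((1 - 1 / φ₀) * a)
      ⟨hx1, hx2.trans ha1⟩ a ⟨hapos.le, ha1⟩ hx2
    have hdiffeq : a - (1 - 1 / φ₀) * a = a / φ₀ := by field_simp; ring
    rw [hdiffeq] at hgap
    have h1 : (1/1000 : ℝ) * (2 * Real.arctan (b / φ₁ / 2)) ≤ (1/1000) * (a / φ₀) := by
      linarith [hsmall.trans hkey]
    have h2 : (1/1000 : ℝ) * (a / φ₀) ≤ (4/5) * (a / φ₀) := by
      have : 0 ≤ a / φ₀ := by positivity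
      linarith
    linarith
  · -- second inequality
    have hb2 : (1 + 1 / φ₁) * b ≤ 1 := by
      have hbe : b * Real.exp 1 ≤ 1 := by rw [← hab]; exact ha1
      have he2 : (2:ℝ) ≤ Real.exp 1 := by linarith [Real.add_one_le_exp (1:ℝ)]
      have hb1 : b * (1 / φ₁) ≤ b * 1 := mul_le_mul_of_nonneg_left hinv₁' hbpos.le
      nlinarith
    have hy1 : 0 ≤ (1 + 1 / φ₁) * b := mul_nonneg (by linarith) hbpos.le
    have hy2 : b ≤ (1 + 1 / φ₁) * b := by nlinarith [mul_nonneg hinv₁.le hbpos.le]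
    have hgap := arctan_gap_aux b ⟨hbpos.le, hble.trans ha1⟩
      ((1 + 1 / φ₁) * b) ⟨hy1, hb2⟩ hy2
    have hdiffeq : (1 + 1 / φ₁) * b - b = b / φ₁ := by field_simp; ring
    rw [hdiffeq] at hgap
    have h1 : (1/1000 : ℝ) * (2 * Real.arctan (b / φ₁ / 2)) ≤ (1/1000) * (b / φ₁) := by
      linarith
    have h2 : (1/1000 : ℝ) * (b / φ₁) ≤ (4/5) * (b / φ₁) := by
      have : 0 ≤ b / φ₁ := by positivity
      linarith
    linarith
end

section
/- Suppose for each pair y ≠ y' in a finite index set F_L with |F_L| ≍ e^{2L} one has the two-point bound P(I_y ∩ I_{y'}) ≤ c'(1+z)e^{−4L+2k}e^{−2z}e^{−c·k_L^{1/4}} whenever (y,y') ∈ G_k (1 ≤ k ≤ L), the one-point bound c₀(1+z)e^{−2L}e^{−2z} ≤ P(I_y) ≤ C₀(1+z)e^{−2L}e^{−2z}, and |G_k| ≤ C·e^{4L−2k} for each k, where k_L = min(k, L−k). Then by the Paley–Zygmund / second-moment inequality, P(∪_{y∈F_L} I_y) ≥ (E J)²/E[J²] ≥ (1+z)e^{−2z}/((1+z)e^{−2z}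 + c) for J = Σ_y 1_{I_y} and some constant c independent of L and z (for z in the range [0, log L] and L large), since Σ_k |G_k|·sup_{(y,y')∈G_k} P(I_y ∩ I_{y'}) ≤ C'·(1+z)e^{−2z}·(E J) and (E J) ≍ (1+z)e^{−2z}·|F_L|·e^{−2L} ≍ (1+z)e^{−2z}. -/
open MeasureTheory

open scoped ENNReal

lemma stmt19_second_moment {Ω : Type} [MeasurableSpace Ω] (P : Measure Ω) {ι : Type} [Fintype ι]
    (I : ι → Set Ω) (hI : ∀ y, MeasurableSet (I y)) :
    (∑ y, P (I y)) ^ 2 ≤ P (⋃ y, I y) * ∑ y : ι, ∑ y' : ι, P (I y ∩ I y') := by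
  classical
  set J : Ω → ℝ≥0∞ := fun ω => ∑ y, (I y).indicator (fun _ => (1:ℝ≥0∞)) ω with hJ
  have hJm : Measurable J := by
    apply Finset.measurable_sum
    intro y _
    exact Measurable.indicator measurable_const (hI y)
  have hU : MeasurableSet (⋃ y, I y) := MeasurableSet.iUnion fun y => hI y
  set g : Ω → ℝ≥0∞ := (⋃ y, I y).indicator (fun _ => (1:ℝ≥0∞)) with hg
  have hgm : Measurable g := Measurable.indicator measurable_const hU
  have h1 : ∫⁻ ω, J ω ∂P = ∑ y, P (I y) := by
    rw [hJ]
    rw [lintegral_finset_sum _ (fun y _ => Measurable.indicator measurable_const (hI y))]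
    refine Finset.sum_congr rfl fun y _ => ?_
    rw [lintegral_indicator (hI y), setLIntegral_one]
  have h2 : ∫⁻ ω, (J * J) ω ∂P = ∑ y : ι, ∑ y' : ι, P (I y ∩ I y') := by
    have hJJ : ∀ ω, (J * J) ω = ∑ y : ι, ∑ y' : ι,
        (I y ∩ I y').indicator (fun _ => (1:ℝ≥0∞)) ω := by
      intro ω
      simp only [Pi.mul_apply, hJ, Finset.sum_mul_sum]
      refine Finset.sum_congr rfl fun y _ => Finset.sum_congr rfl fun y' _ => ?_
      rw [← Set.inter_indicator_mul]
      simp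
    simp_rw [hJJ]
    rw [lintegral_finset_sum _ (fun y _ => Finset.measurable_sum _
      (fun y' _ => Measurable.indicator measurable_const ((hI y).inter (hI y'))))]
    refine Finset.sum_congr rfl fun y _ => ?_
    rw [lintegral_finset_sum _ (fun y' _ => Measurable.indicator measurable_const
      ((hI y).inter (hI y')))]
    refine Finset.sum_congr rfl fun y' _ => ?_
    rw [lintegral_indicator ((hI y).inter (hI y')), setLIntegral_one]
  have hJg : ∀ ω, J ω = (J * g) ω := by
    intro ω
    by_cases hω : ω ∈ ⋃ y, I y
    · simp [hg, Set.indicator_of_mem hω]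
    · have : J ω = 0 := by
        apply Finset.sum_eq_zero
        intro y _
        have : ω ∉ I y := fun h => hω (Set.mem_iUnion.mpr ⟨y, h⟩)
        simp [Set.indicator_of_notMem this]
      simp [Pi.mul_apply, this]
  have h22 : (2:ℝ).HolderConjugate 2 := Real.HolderConjugate.two_two
  have hCS := ENNReal.lintegral_mul_le_Lp_mul_Lq P h22 hJm.aemeasurable hgm.aemeasurable
  have hg2 : ∀ ω, g ω ^ (2:ℝ) = g ω := by
    intro ω
    by_cases hω : ω ∈ ⋃ y, I y
    · simp [hg, Set.indicator_of_mem hω]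
    · simp [hg, Set.indicator_of_notMem hω, ENNReal.zero_rpow_of_pos]
  have hgint : ∫⁻ ω, g ω ^ (2:ℝ) ∂P = P (⋃ y, I y) := by
    simp_rw [hg2]
    rw [hg, lintegral_indicator hU, setLIntegral_one]
  have hJ2 : ∀ ω, J ω ^ (2:ℝ) = (J * J) ω := by
    intro ω
    rw [show (2:ℝ) = ((2:ℕ):ℝ) by norm_num, ENNReal.rpow_natCast]
    simp [pow_two]
  have hJint : ∫⁻ ω, J ω ^ (2:ℝ) ∂P = ∑ y : ι, ∑ y' : ι, P (I y ∩ I y') := by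
    simp_rw [hJ2]; exact h2
  have hJgint : ∫⁻ ω, (J * g) ω ∂P = ∑ y, P (I y) := by
    rw [← h1]; exact lintegral_congr fun ω => (hJg ω).symm
  rw [hJgint, hJint, hgint] at hCS
  have hsq := pow_le_pow_left₀ zero_le hCS 2
  rw [mul_pow] at hsq
  have e1 : ∀ x : ℝ≥0∞, (x ^ ((1:ℝ)/2)) ^ (2:ℕ) = x := by
    intro x
    rw [← ENNReal.rpow_natCast _ 2, ← ENNReal.rpow_mul]
    norm_num
  rw [e1, e1] at hsq
  calc (∑ y, P (I y)) ^ 2 ≤ (∑ y : ι, ∑ y' : ι, P (I y ∩ I y')) * P (⋃ y, I y) := hsq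
    _ = P (⋃ y, I y) * ∑ y : ι, ∑ y' : ι, P (I y ∩ I y') := mul_comm _ _

lemma stmt19_sum_union_le {β : Type*} [DecidableEq β] (A B : Finset β) (f : β → ℝ≥0∞) :
    ∑ p ∈ A ∪ B, f p ≤ ∑ p ∈ A, f p + ∑ p ∈ B, f p :=
  (self_le_add_right _ _).trans_eq (Finset.sum_union_inter)

lemma stmt19_sum_biUnion_le {α β : Type*} [DecidableEq α] [DecidableEq β] (s : Finset α)
    (t : α → Finset β) (f : β → ℝ≥0∞) :
    ∑ p ∈ s.biUnion t, f p ≤ ∑ k ∈ s, ∑ p ∈ t k, f p := by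
  induction s using Finset.induction_on with
  | empty => simp
  | insert _ _ h ih =>
    rw [Finset.biUnion_insert, Finset.sum_insert h]
    exact (stmt19_sum_union_le _ _ _).trans (add_le_add le_rfl ih)

lemma stmt19_invsq (m : ℕ) : ∑ j ∈ Finset.range m, (1:ℝ)/((j:ℝ)+1)^2 ≤ 2 := by
  have h : ∀ m : ℕ, ∑ j ∈ Finset.range m, (1:ℝ)/((j:ℝ)+1)^2 ≤ 2 - 1/(m:ℝ) := by
    intro m
    induction m with
    | zero => norm_num
    | succ n ih =>
      rcases Nat.eq_zero_or_pos n with rfl | hn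
      · norm_num
      · rw [Finset.sum_range_succ]
        have hn0 : (0:ℝ) < (n:ℝ) := by exact_mod_cast hn
        have hn1 : (0:ℝ) < (n:ℝ)+1 := by linarith
        have key : (1:ℝ)/((n:ℝ)+1)^2 ≤ 1/(n:ℝ) - 1/((n:ℝ)+1) := by
          have h3 : 1/(n:ℝ) - 1/((n:ℝ)+1) = 1/((n:ℝ)*((n:ℝ)+1)) := by
            rw [div_sub_div _ _ (ne_of_gt hn0) (ne_of_gt hn1)]
            congr 1
            ring
          rw [h3]
          apply one_div_le_one_div_of_le (by positivity)
          nlinarith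
        push_cast
        linarith
  have h2 := h m
  have h3 : (0:ℝ) ≤ 1/(m:ℝ) := by positivity
  linarith

lemma stmt19_exp_bound {c : ℝ} (hc : 0 < c) {x : ℝ} (hx : 1 ≤ x) :
    Real.exp (-(c * x ^ ((1:ℝ)/4))) ≤ 40320 / c^8 * (1 / x^2) := by
  have hx0 : 0 < x := lt_of_lt_of_le one_pos hx
  have hpow : (c * x ^ ((1:ℝ)/4))^8 = c^8 * x^2 := by
    rw [mul_pow, ← Real.rpow_natCast (x ^ ((1:ℝ)/4)) 8, ← Real.rpow_mul hx0.le]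
    norm_num
  have h1 : (c * x ^ ((1:ℝ)/4))^8 / (Nat.factorial 8 : ℝ) ≤ Real.exp (c * x ^ ((1:ℝ)/4)) :=
    Real.pow_div_factorial_le_exp (x := c * x ^ ((1:ℝ)/4)) (by positivity) 8
  rw [hpow] at h1
  have hfac : (Nat.factorial 8 : ℝ) = 40320 := by norm_num [Nat.factorial]
  rw [hfac] at h1
  have hlb : 0 < c^8 * x^2 / 40320 := by positivity
  rw [Real.exp_neg]
  have h2 : (Real.exp (c * x ^ ((1:ℝ)/4)))⁻¹ ≤ (c^8 * x^2 / 40320)⁻¹ :=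
    inv_anti₀ hlb h1
  refine h2.trans_eq ?_
  field_simp <;> ring

lemma stmt19_expsum {c : ℝ} (hc : 0 < c) (n : ℕ) :
    ∑ j ∈ Finset.range n, Real.exp (-(c * ((j:ℕ):ℝ) ^ ((1:ℝ)/4))) ≤ 1 + 80640 / c^8 := by
  cases n with
  | zero => simp; positivity
  | succ m =>
    rw [Finset.sum_range_succ']
    have h0 : Real.exp (-(c * ((0:ℕ):ℝ) ^ ((1:ℝ)/4))) = 1 := by
      rw [Nat.cast_zero, Real.zero_rpow (by norm_num)]
      simp
    rw [h0]
    have hterm : ∀ j ∈ Finset.range m,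
        Real.exp (-(c * (((j+1:ℕ)):ℝ) ^ ((1:ℝ)/4))) ≤ 40320/c^8 * (1/((j:ℝ)+1)^2) := by
      intro j _
      have : (((j+1:ℕ)):ℝ) = (j:ℝ)+1 := by push_cast; ring
      rw [this]
      exact stmt19_exp_bound hc (by linarith [Nat.cast_nonneg (α := ℝ) j])
    have := Finset.sum_le_sum hterm
    rw [← Finset.mul_sum] at this
    have h2 := stmt19_invsq m
    have h3 : (0:ℝ) ≤ 40320 / c^8 := by positivity
    have h4 : 40320 / c^8 * (∑ j ∈ Finset.range m, (1:ℝ)/((j:ℝ)+1)^2) ≤ 40320/c^8 * 2 :=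
      mul_le_mul_of_nonneg_left h2 h3
    have h5 : 40320 / c^8 * 2 = 80640 / c^8 := by ring
    linarith

lemma stmt19_minsum {c : ℝ} (hc : 0 < c) (L : ℕ) :
    ∑ k ∈ Finset.Icc 1 L, Real.exp (-c * ((min k (L-k) : ℕ):ℝ) ^ ((1:ℝ)/4)) ≤
      2 * (1 + 80640 / c^8) := by
  have hsplit : ∀ k ∈ Finset.Icc 1 L,
      Real.exp (-c * ((min k (L-k) : ℕ):ℝ) ^ ((1:ℝ)/4)) ≤
      Real.exp (-(c * ((k:ℕ):ℝ) ^ ((1:ℝ)/4))) + Real.exp (-(c * (((L-k) : ℕ):ℝ) ^ ((1:ℝ)/4))) := by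
    intro k _
    rw [neg_mul]
    rcases min_choice k (L-k) with h | h <;> rw [h]
    · exact le_add_of_nonneg_right (Real.exp_pos _).le
    · exact le_add_of_nonneg_left (Real.exp_pos _).le
  refine (Finset.sum_le_sum hsplit).trans ?_
  rw [Finset.sum_add_distrib]
  have hA : ∑ k ∈ Finset.Icc 1 L, Real.exp (-(c * ((k:ℕ):ℝ)^((1:ℝ)/4))) ≤ 1 + 80640/c^8 := by
    refine le_trans (Finset.sum_le_sum_of_subset_of_nonneg ?_ ?_) (stmt19_expsum hc (L+1))
    · intro k hk
      simp only [Finset.mem_Icc, Finset.mem_range] at hk ⊢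
      omega
    · intros
      positivity
  have hB : ∑ k ∈ Finset.Icc 1 L, Real.exp (-(c * (((L-k):ℕ):ℝ)^((1:ℝ)/4))) ≤ 1 + 80640/c^8 := by
    have hinj : ∀ x ∈ Finset.Icc 1 L, ∀ y ∈ Finset.Icc 1 L, L - x = L - y → x = y := by
      intro x hx y hy h
      simp only [Finset.mem_Icc] at hx hy
      omega
    rw [← Finset.sum_image (f := fun j : ℕ => Real.exp (-(c * ((j:ℕ):ℝ)^((1:ℝ)/4))))
      (g := fun k => L - k) hinj]
    refine le_trans (Finset.sum_le_sum_of_subset_of_nonneg ?_ ?_) (stmt19_expsum hc (L+1))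
    · intro j hj
      simp only [Finset.mem_image, Finset.mem_Icc, Finset.mem_range] at hj ⊢
      omega
    · intros
      positivity
  linarith

/-- Second-moment (Paley–Zygmund) lower bound: given one-point bounds
`c₀(1+z)e^{−2L}e^{−2z} ≤ P(I_y) ≤ C₀(1+z)e^{−2L}e^{−2z}` on a finite index set with
`|F_L| ≍ e^{2L}`, two-point bounds
`P(I_y ∩ I_{y'}) ≤ c'(1+z)e^{−4L+2k}e^{−2z}e^{−c·k_L^{1/4}}` for `(y,y') ∈ G_k` with
`|G_k| ≤ C e^{4L−2k}` (`k_L = min(k, L−k)`), one gets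
`P(∪_y I_y) ≥ (1+z)e^{−2z}/((1+z)e^{−2z} + c)` for a constant `c` independent of `L`
(large) and `z ∈ [0, log L]`. -/
theorem stmt19 (c' c c₀ C₀ C : ℝ) (hc' : 0 < c') (hc : 0 < c) (hc₀ : 0 < c₀)
    (hC₀ : 0 < C₀) (hC : 0 < C) :
    ∃ (cc : ℝ) (L₀ : ℕ), 0 < cc ∧
      ∀ (L : ℕ) (z : ℝ) (Ω : Type) (_ : MeasurableSpace Ω) (P : Measure Ω),
        IsProbabilityMeasure P →
        ∀ (ι : Type) (_ : Fintype ι) (I : ι → Set Ω) (G : ℕ → Finset (ι × ι)),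
          L₀ ≤ L → 0 ≤ z → z ≤ Real.log L →
          (∀ y, MeasurableSet (I y)) →
          ((Fintype.card ι : ℝ) ≤ C * Real.exp (2 * L)) →
          (Real.exp (2 * L) ≤ C * (Fintype.card ι : ℝ)) →
          (∀ y y' : ι, y ≠ y' → ∃ k, 1 ≤ k ∧ k ≤ L ∧ (y, y') ∈ G k) →
          (∀ k, 1 ≤ k → k ≤ L →
            ((G k).card : ℝ) ≤ C * Real.exp (4 * L - 2 * k)) →
          (∀ y, ENNReal.ofReal (c₀ * (1 + z) * Real.exp (-2 * L) * Real.exp (-2 * z)) ≤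
              P (I y) ∧
            P (I y) ≤
              ENNReal.ofReal (C₀ * (1 + z) * Real.exp (-2 * L) * Real.exp (-2 * z))) →
          (∀ k, 1 ≤ k → k ≤ L → ∀ p ∈ G k, p.1 ≠ p.2 →
            P (I p.1 ∩ I p.2) ≤
              ENNReal.ofReal (c' * (1 + z) * Real.exp (-(4 * L) + 2 * k) *
                Real.exp (-2 * z) *
                Real.exp (-c * ((min k (L - k) : ℕ) : ℝ) ^ ((1 : ℝ) / 4)))) →
          ENNReal.ofReal
              ((1 + z) * Real.exp (-2 * z) / ((1 + z) * Real.exp (-2 * z) + cc)) ≤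
            P (⋃ y, I y) := by
  classical
  set K : ℝ := 2 * (1 + 80640 / c ^ 8) with hK
  have hKpos : 0 < K := by positivity
  set B : ℝ := C₀ * C + C * c' * K with hB
  have hBpos : 0 < B := by positivity
  clear_value K B
  refine ⟨B * C ^ 2 / c₀ ^ 2, 1, by positivity, ?_⟩
  intro L z Ω mΩ P hP ι hι I G hL hz hzlog hmeas hcard₁ hcard₂ hcover hGcard hone htwo
  set cc : ℝ := B * C ^ 2 / c₀ ^ 2 with hcc
  have hccpos : 0 < cc := by positivity
  clear_value cc
  set a : ℝ := (1 + z) * Real.exp (-2 * z) with ha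
  have hapos : 0 < a := by positivity
  clear_value a
  set eL : ℝ := Real.exp (2 * (L:ℝ)) with heL
  have heLpos : 0 < eL := Real.exp_pos _
  have hENeg : Real.exp (-2 * (L:ℝ)) = eL⁻¹ := by
    rw [heL, ← Real.exp_neg]
    ring_nf
  -- the one-point bounds, rewritten
  set lb : ℝ := c₀ * (1 + z) * Real.exp (-2 * (L:ℝ)) * Real.exp (-2 * z) with hlb
  set ub : ℝ := C₀ * (1 + z) * Real.exp (-2 * (L:ℝ)) * Real.exp (-2 * z) with hub
  have hlbpos : 0 < lb := by positivity
  have hubpos : 0 < ub := by positivity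
  have hlb_eq : lb = c₀ * eL⁻¹ * a := by rw [hlb, hENeg, ha]; ring
  have hub_eq : ub = C₀ * eL⁻¹ * a := by rw [hub, hENeg, ha]; ring
  clear_value lb ub eL
  have hcard0 : 0 < Fintype.card ι := by
    rcases Nat.eq_zero_or_pos (Fintype.card ι) with h | h
    · rw [h] at hcard₂
      simp only [Nat.cast_zero, mul_zero] at hcard₂
      linarith
    · exact h
  have hne : Nonempty ι := Fintype.card_pos_iff.mp hcard0
  obtain ⟨y₀⟩ := hne
  set S1 : ℝ≥0∞ := ∑ y : ι, P (I y) with hS1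
  set T : ℝ≥0∞ := ∑ y : ι, ∑ y' : ι, P (I y ∩ I y') with hT
  -- lower bound on S1
  have hS1lb : ENNReal.ofReal (c₀ / C * a) ≤ S1 := by
    have key : ENNReal.ofReal (c₀ / C * a) ≤ (Fintype.card ι : ℝ≥0∞) * ENNReal.ofReal lb := by
      rw [← ENNReal.ofReal_natCast, ← ENNReal.ofReal_mul (by positivity)]
      apply ENNReal.ofReal_le_ofReal
      rw [hlb_eq]
      have h1 : eL / C ≤ (Fintype.card ι : ℝ) := by
        rw [div_le_iff₀ hC]
        nlinarith [hcard₂]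
      have h2 : eL / C * (c₀ * eL⁻¹ * a) = c₀ / C * a := by
        field_simp
      calc c₀ / C * a = eL / C * (c₀ * eL⁻¹ * a) := h2.symm
        _ ≤ (Fintype.card ι : ℝ) * (c₀ * eL⁻¹ * a) :=
            mul_le_mul_of_nonneg_right h1 (by positivity)
    refine key.trans ?_
    rw [hS1]
    calc (Fintype.card ι : ℝ≥0∞) * ENNReal.ofReal lb
        = ∑ _y : ι, ENNReal.ofReal lb := by
          rw [Finset.sum_const, nsmul_eq_mul, Finset.card_univ]
      _ ≤ ∑ y : ι, P (I y) := Finset.sum_le_sum fun y _ => (hone y).1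
  -- diagonal upper bound helper
  have hcard_ub : (Fintype.card ι : ℝ≥0∞) * ENNReal.ofReal ub ≤ ENNReal.ofReal (C₀ * C * a) := by
    rw [← ENNReal.ofReal_natCast, ← ENNReal.ofReal_mul (by positivity)]
    apply ENNReal.ofReal_le_ofReal
    rw [hub_eq]
    have h2 : C * eL * (C₀ * eL⁻¹ * a) = C₀ * C * a := by
      field_simp
    calc (Fintype.card ι : ℝ) * (C₀ * eL⁻¹ * a)
        ≤ C * eL * (C₀ * eL⁻¹ * a) := mul_le_mul_of_nonneg_right hcard₁ (by positivity)
      _ = C₀ * C * a := h2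
  -- split T
  have hTsplit : T = (∑ p ∈ (Finset.univ ×ˢ Finset.univ).filter (fun p : ι × ι => p.1 = p.2),
        P (I p.1 ∩ I p.2))
      + ∑ p ∈ (Finset.univ ×ˢ Finset.univ).filter (fun p : ι × ι => ¬ p.1 = p.2),
        P (I p.1 ∩ I p.2) := by
    rw [hT, ← Finset.sum_product (s := (Finset.univ : Finset ι)) (t := (Finset.univ : Finset ι))
      (f := fun p : ι × ι => P (I p.1 ∩ I p.2)),
      Finset.sum_filter_add_sum_filter_not]
  -- diagonal bound
  have hdiag : ∑ p ∈ (Finset.univ ×ˢ Finset.univ).filter (fun p : ι × ι => p.1 = p.2),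
      P (I p.1 ∩ I p.2) ≤ ENNReal.ofReal (C₀ * C * a) := by
    have hterm : ∀ p ∈ (Finset.univ ×ˢ Finset.univ).filter (fun p : ι × ι => p.1 = p.2),
        P (I p.1 ∩ I p.2) ≤ ENNReal.ofReal ub := by
      intro p hp
      have hpe : p.1 = p.2 := (Finset.mem_filter.mp hp).2
      rw [← hpe, Set.inter_self]
      exact (hone p.1).2
    refine (Finset.sum_le_sum hterm).trans ?_
    rw [Finset.sum_const, nsmul_eq_mul]
    refine le_trans ?_ hcard_ub
    apply mul_le_mul_left
    have hcard_diag : ((Finset.univ ×ˢ Finset.univ).filter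
        (fun p : ι × ι => p.1 = p.2)).card ≤ Fintype.card ι := by
      apply Finset.card_le_card_of_injOn (fun p => p.1) (fun p _ => Finset.mem_univ _)
      intro p hp q hq hpq
      have hpq' : p.1 = q.1 := hpq
      simp only [Finset.coe_filter, Set.mem_setOf_eq] at hp hq
      exact Prod.ext hpq' (by rw [← hp.2, ← hq.2]; exact hpq')
    exact_mod_cast Nat.cast_le.mpr hcard_diag
  -- off-diagonal bound
  have hoff : ∑ p ∈ (Finset.univ ×ˢ Finset.univ).filter (fun p : ι × ι => ¬ p.1 = p.2),
      P (I p.1 ∩ I p.2) ≤ ENNReal.ofReal (C * c' * K * a) := by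
    set D : Finset (ι × ι) := (Finset.Icc 1 L).biUnion
      (fun k => (G k).filter (fun p : ι × ι => p.1 ≠ p.2)) with hD
    have hsub : (Finset.univ ×ˢ Finset.univ).filter (fun p : ι × ι => ¬ p.1 = p.2) ⊆ D := by
      intro p hp
      have hpne : p.1 ≠ p.2 := (Finset.mem_filter.mp hp).2
      obtain ⟨k, hk1, hkL, hkG⟩ := hcover p.1 p.2 hpne
      rw [hD, Finset.mem_biUnion]
      exact ⟨k, Finset.mem_Icc.mpr ⟨hk1, hkL⟩, Finset.mem_filter.mpr ⟨by simpa using hkG, hpne⟩⟩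
    refine (Finset.sum_le_sum_of_subset hsub).trans ?_
    refine (stmt19_sum_biUnion_le _ _ _).trans ?_
    have hperk : ∀ k ∈ Finset.Icc 1 L,
        ∑ p ∈ (G k).filter (fun p : ι × ι => p.1 ≠ p.2), P (I p.1 ∩ I p.2) ≤
        ENNReal.ofReal (C * c' * a *
          Real.exp (-c * ((min k (L - k) : ℕ) : ℝ) ^ ((1 : ℝ) / 4))) := by
      intro k hk
      obtain ⟨hk1, hkL⟩ := Finset.mem_Icc.mp hk
      set bd : ℝ := c' * (1 + z) * Real.exp (-(4 * (L:ℝ)) + 2 * k) * Real.exp (-2 * z) *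
        Real.exp (-c * ((min k (L - k) : ℕ) : ℝ) ^ ((1 : ℝ) / 4)) with hbd
      have hbdpos : 0 < bd := by positivity
      have hterm : ∀ p ∈ (G k).filter (fun p : ι × ι => p.1 ≠ p.2),
          P (I p.1 ∩ I p.2) ≤ ENNReal.ofReal bd := by
        intro p hp
        obtain ⟨hpG, hpne⟩ := Finset.mem_filter.mp hp
        exact htwo k hk1 hkL p hpG hpne
      refine (Finset.sum_le_sum hterm).trans ?_
      rw [Finset.sum_const, nsmul_eq_mul, ← ENNReal.ofReal_natCast,
        ← ENNReal.ofReal_mul (by positivity)]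
      apply ENNReal.ofReal_le_ofReal
      have hcardk : (((G k).filter (fun p : ι × ι => p.1 ≠ p.2)).card : ℝ) ≤
          C * Real.exp (4 * (L:ℝ) - 2 * k) := by
        refine le_trans ?_ (hGcard k hk1 hkL)
        exact_mod_cast Finset.card_filter_le _ _
      have hexp1 : Real.exp (4 * (L:ℝ) - 2 * k) * Real.exp (-(4 * (L:ℝ)) + 2 * k) = 1 := by
        rw [← Real.exp_add]
        norm_num
      have heq : C * Real.exp (4 * (L:ℝ) - 2 * k) * bd = C * c' * a *
          Real.exp (-c * ((min k (L - k) : ℕ) : ℝ) ^ ((1 : ℝ) / 4)) := by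
        rw [hbd, ha]
        linear_combination (C * c' * (1 + z) * Real.exp (-2 * z) *
          Real.exp (-c * ((min k (L - k) : ℕ) : ℝ) ^ ((1 : ℝ) / 4))) * hexp1
      calc (((G k).filter (fun p : ι × ι => p.1 ≠ p.2)).card : ℝ) * bd
          ≤ C * Real.exp (4 * (L:ℝ) - 2 * k) * bd :=
            mul_le_mul_of_nonneg_right hcardk hbdpos.le
        _ = C * c' * a * Real.exp (-c * ((min k (L - k) : ℕ) : ℝ) ^ ((1 : ℝ) / 4)) := heq
    refine (Finset.sum_le_sum hperk).trans ?_
    rw [← ENNReal.ofReal_sum_of_nonneg (fun k _ => by positivity)]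
    apply ENNReal.ofReal_le_ofReal
    rw [← Finset.mul_sum]
    have hmin := stmt19_minsum hc L
    calc C * c' * a * ∑ k ∈ Finset.Icc 1 L,
          Real.exp (-c * ((min k (L - k) : ℕ) : ℝ) ^ ((1 : ℝ) / 4))
        ≤ C * c' * a * K := by
          apply mul_le_mul_of_nonneg_left (by rw [hK]; exact hmin) (by positivity)
      _ = C * c' * K * a := by ring
  -- T bounds
  have hTub : T ≤ ENNReal.ofReal (B * a) := by
    rw [hTsplit]
    refine (add_le_add hdiag hoff).trans ?_
    rw [← ENNReal.ofReal_add (by positivity) (by positivity)]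
    apply ENNReal.ofReal_le_ofReal
    exact le_of_eq (by rw [hB]; ring)
  have hT0 : T ≠ 0 := by
    have h1 : ENNReal.ofReal lb ≤ T := by
      have h2 : ENNReal.ofReal lb ≤ P (I y₀ ∩ I y₀) := by
        rw [Set.inter_self]; exact (hone y₀).1
      refine h2.trans ?_
      refine le_trans ?_ (Finset.single_le_sum (f := fun y => ∑ y' : ι, P (I y ∩ I y'))
        (fun _ _ => zero_le) (Finset.mem_univ y₀))
      exact Finset.single_le_sum (f := fun y' => P (I y₀ ∩ I y')) (fun _ _ => zero_le)
        (Finset.mem_univ y₀)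
    intro h0
    rw [h0] at h1
    simp only [le_zero_iff, ENNReal.ofReal_eq_zero] at h1
    linarith
  have hTtop : T ≠ ⊤ := ne_top_of_le_ne_top ENNReal.ofReal_ne_top hTub
  -- core second moment
  have hcore : S1 ^ 2 ≤ P (⋃ y, I y) * T := stmt19_second_moment P I hmeas
  -- real inequality
  have hreal : a / (a + cc) * (B * a) ≤ (c₀ / C * a) ^ 2 := by
    rw [div_mul_eq_mul_div, div_le_iff₀ (by positivity)]
    have hkey : (c₀ / C) ^ 2 * cc = B := by
      rw [hcc]
      field_simp
    have h5 : (0:ℝ) ≤ (c₀ / C) ^ 2 * a ^ 2 * a := by positivity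
    calc a * (B * a) = B * a ^ 2 := by ring
      _ ≤ (c₀ / C) ^ 2 * a ^ 2 * a + B * a ^ 2 := by linarith
      _ = (c₀ / C * a) ^ 2 * (a + cc) := by rw [← hkey]; ring
  -- final chain
  have hchain : ENNReal.ofReal (a / (a + cc)) * T ≤ P (⋃ y, I y) * T := by
    calc ENNReal.ofReal (a / (a + cc)) * T
        ≤ ENNReal.ofReal (a / (a + cc)) * ENNReal.ofReal (B * a) := mul_le_mul_right hTub _
      _ = ENNReal.ofReal (a / (a + cc) * (B * a)) := (ENNReal.ofReal_mul (by positivity)).symm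
      _ ≤ ENNReal.ofReal ((c₀ / C * a) ^ 2) := ENNReal.ofReal_le_ofReal hreal
      _ = ENNReal.ofReal (c₀ / C * a) ^ 2 := by rw [ENNReal.ofReal_pow (by positivity)]
      _ ≤ S1 ^ 2 := pow_le_pow_left₀ zero_le hS1lb 2
      _ ≤ P (⋃ y, I y) * T := hcore
  exact (ENNReal.mul_le_mul_iff_left hT0 hTtop).mp hchain
end
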